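/- arXiv:1008.0731 — 4 statements merged into one kernel-verified Lean document; each statement's English description precedes it below -/
import Mathlib

section
/- If f is a monic polynomial with integer coefficients and nonzero constant term, having a simple real root θ > 1 such that every other complex root of f has modulus strictly less than 1, then f is irreducible over the rationals. -/
open Polynomial

lemma myProd_le_one (s : Multiset ℝ) (h : ∀ x ∈ s, 0 ≤ x ∧ x ≤ 1) :
    0 ≤ s.prod ∧ s.prod ≤ 1 := by
  induction s using Multiset.induction with
  | empty => simp
  | cons a t ih =>
    obtain ⟨ha0, ha1⟩ := h a (Multiset.mem_cons_self a t)
    obtain ⟨ht0, ht1⟩ := ih (fun x hx => h x (Multiset.mem_cons_of_mem hx))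
    rw [Multiset.prod_cons]
    exact ⟨mul_nonneg ha0 ht0, by
      calc a * t.prod ≤ 1 * 1 := mul_le_mul ha1 ht1 ht0 zero_le_one
        _ = 1 := one_mul 1⟩

lemma myProd_lt_one (a : ℝ) (t : Multiset ℝ) (h : ∀ x ∈ a ::ₘ t, 0 ≤ x ∧ x < 1) :
    (a ::ₘ t).prod < 1 := by
  obtain ⟨ha0, ha1⟩ := h a (Multiset.mem_cons_self a t)
  obtain ⟨ht0, ht1⟩ := myProd_le_one t (fun x hx =>
    ⟨(h x (Multiset.mem_cons_of_mem hx)).1, le_of_lt (h x (Multiset.mem_cons_of_mem hx)).2⟩)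
  rw [Multiset.prod_cons]
  calc a * t.prod ≤ a := mul_le_of_le_one_right ha0 ht1
    _ < 1 := ha1

lemma aeval_eq_eval_map (f : Polynomial ℤ) (z : ℂ) :
    Polynomial.aeval z f = (f.map (Int.castRingHom ℂ)).eval z := by
  rw [aeval_def, eval₂_eq_eval_map, algebraMap_int_eq]

lemma key (f p q : Polynomial ℤ) (hp : p.Monic) (hfpq : f = p * q)
    (hconst : f.coeff 0 ≠ 0) (θ : ℝ)
    (hsmall : ∀ z : ℂ, Polynomial.aeval z f = 0 → z ≠ (θ : ℂ) → ‖z‖ < 1)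
    (hpθ : (p.map (Int.castRingHom ℂ)).eval (θ : ℂ) ≠ 0) : p = 1 := by
  by_contra hne
  set pC := p.map (Int.castRingHom ℂ) with hpCdef
  have hpCm : pC.Monic := hp.map _
  have hdeg : p.natDegree ≠ 0 := fun h0 => hne (hp.natDegree_eq_zero.mp h0)
  have hdegC : pC.natDegree = p.natDegree := hp.natDegree_map _
  -- every root of pC has abs < 1
  have hroots : ∀ r ∈ pC.roots, 0 ≤ ‖r‖ ∧ ‖r‖ < 1 := by
    intro r hr
    have hrroot : pC.IsRoot r := (mem_roots (hpCm.ne_zero)).mp hr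
    have hrf : Polynomial.aeval r f = 0 := by
      rw [aeval_eq_eval_map, hfpq, Polynomial.map_mul, eval_mul, ← hpCdef, hrroot]
      ring
    have hrne : r ≠ (θ : ℂ) := by
      rintro rfl; exact hpθ hrroot
    exact ⟨norm_nonneg _, hsmall r hrf hrne⟩
  -- pC splits, roots nonempty
  have hsplit : pC.Splits := IsAlgClosed.splits _
  have hcard : pC.natDegree = Multiset.card pC.roots := by
    have := hsplit.natDegree_eq_card_roots
    simpa using this
  have hne0 : pC.roots ≠ 0 := by
    intro h0
    rw [h0, Multiset.card_zero, hdegC] at hcard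
    exact hdeg hcard
  -- abs of eval at 0
  have h1 : pC.eval 0 = (pC.roots.map (fun a => -a)).prod := by
    conv_lhs => rw [hsplit.eq_prod_roots_of_monic hpCm]
    rw [eval_multiset_prod, Multiset.map_map]
    congr 1
    apply Multiset.map_congr rfl
    intro r _
    simp
  have heval0 : ‖pC.eval 0‖ = (pC.roots.map (fun r => ‖r‖)).prod := by
    rw [h1, show ∀ m : Multiset ℂ, ‖m.prod‖ = (m.map (fun x => ‖x‖)).prod from fun m => map_multiset_prod (normHom : ℂ →*₀ ℝ) m, Multiset.map_map]
    congr 1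
    apply Multiset.map_congr rfl
    intro r _
    simp
  have hlt : ‖pC.eval 0‖ < 1 := by
    obtain ⟨r, hr⟩ := Multiset.exists_mem_of_ne_zero hne0
    obtain ⟨t, ht⟩ := Multiset.exists_cons_of_mem hr
    rw [heval0, ht, Multiset.map_cons]
    apply myProd_lt_one
    intro x hx
    rw [← Multiset.map_cons, ← ht] at hx
    obtain ⟨s, hs, rfl⟩ := Multiset.mem_map.mp hx
    exact hroots s hs
  -- but eval at 0 is a nonzero integer
  have hp0 : p.coeff 0 ≠ 0 := by
    intro h0
    rw [hfpq, mul_coeff_zero, h0, zero_mul] at hconst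
    exact hconst rfl
  have heval : pC.eval 0 = ((p.coeff 0 : ℤ) : ℂ) := by
    rw [← coeff_zero_eq_eval_zero, hpCdef, coeff_map]
    simp
  rw [heval] at hlt
  have : (1 : ℝ) ≤ ‖((p.coeff 0 : ℤ) : ℂ)‖ := by
    rw [Complex.norm_intCast]
    exact_mod_cast Int.one_le_abs hp0
  linarith

theorem stmt_0 (f : Polynomial ℤ) (hmonic : f.Monic) (hconst : f.coeff 0 ≠ 0)
    (θ : ℝ) (hθ : 1 < θ)
    (hroot : Polynomial.aeval (θ : ℂ) f = 0)
    (hsimple : (f.map (Int.castRingHom ℂ)).rootMultiplicity (θ : ℂ) = 1)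
    (hsmall : ∀ z : ℂ, Polynomial.aeval z f = 0 → z ≠ (θ : ℂ) → ‖z‖ < 1) :
    Irreducible (f.map (Int.castRingHom ℚ)) := by
  have hfirr : Irreducible f := by
    constructor
    · intro hu
      have h1 := hmonic.eq_one_of_isUnit hu
      rw [h1] at hroot
      simp at hroot
    · intro g h hf
      have hlc : g.leadingCoeff * h.leadingCoeff = 1 := by
        have := hmonic
        rw [Monic, hf, leadingCoeff_mul] at this
        exact this
      set g' := C h.leadingCoeff * g with hg'def
      set h' := C g.leadingCoeff * h with hh'def
      have hg'm : g'.Monic := by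
        rw [Monic, hg'def, leadingCoeff_mul, leadingCoeff_C, mul_comm]
        exact hlc
      have hh'm : h'.Monic := by
        rw [Monic, hh'def, leadingCoeff_mul, leadingCoeff_C]
        exact hlc
      have hf' : f = g' * h' := by
        rw [hg'def, hh'def, hf]
        rw [show C h.leadingCoeff * g * (C g.leadingCoeff * h)
            = C (g.leadingCoeff * h.leadingCoeff) * (g * h) by rw [C_mul]; ring, hlc]
        simp
      have hcast : (f.map (Int.castRingHom ℂ))
          = g'.map (Int.castRingHom ℂ) * h'.map (Int.castRingHom ℂ) := by
        rw [hf', Polynomial.map_mul]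
      by_cases hgθ : (g'.map (Int.castRingHom ℂ)).eval (θ : ℂ) = 0
      · -- then h' has no root at θ
        right
        have hne : g'.map (Int.castRingHom ℂ) * h'.map (Int.castRingHom ℂ) ≠ 0 := by
          rw [← hcast]
          exact (hmonic.map _).ne_zero
        have hmulrm := rootMultiplicity_mul (x := (θ : ℂ)) hne
        rw [← hcast, hsimple] at hmulrm
        have hgpos : 0 < (g'.map (Int.castRingHom ℂ)).rootMultiplicity (θ : ℂ) :=
          (rootMultiplicity_pos (hg'm.map _).ne_zero).mpr hgθ
        have hhzero : (h'.map (Int.castRingHom ℂ)).rootMultiplicity (θ : ℂ) = 0 := by omega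
        have hhθ : (h'.map (Int.castRingHom ℂ)).eval (θ : ℂ) ≠ 0 := by
          intro h0
          have := (rootMultiplicity_pos (hh'm.map _).ne_zero).mpr h0
          omega
        have hh1 : h' = 1 := key f h' g' hh'm (by rw [hf', mul_comm]) hconst θ hsmall hhθ
        exact IsUnit.of_mul_eq_one (a := h) (C g.leadingCoeff) (by rw [mul_comm, ← hh'def, hh1])
      · left
        have hg1 : g' = 1 := key f g' h' hg'm hf' hconst θ hsmall hgθ
        exact IsUnit.of_mul_eq_one (a := g) (C h.leadingCoeff) (by rw [mul_comm, ← hg'def, hg1])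
  rw [← algebraMap_int_eq]
  exact (hmonic.irreducible_iff_irreducible_map_fraction_map).mp hfirr
end

section
/- The polynomial L(z) = z^{10} + z^9 − z^7 − z^6 − z^5 − z^4 − z^3 + z + 1 (Lehmer's polynomial) has exactly one real root τ > 1, exactly one real root in (0,1) (namely 1/τ), and all its other eight roots lie on the unit circle. -/
open Polynomial

/-- Lehmer's polynomial, as a polynomial over `ℂ`. -/
noncomputable def LehmerPoly : Polynomial ℂ :=
  X ^ 10 + X ^ 9 - X ^ 7 - X ^ 6 - X ^ 5 - X ^ 4 - X ^ 3 + X + 1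

def qr (w : ℝ) : ℝ := w^5 + w^4 - 5*w^3 - 5*w^2 + 4*w + 3

noncomputable def Qc : Polynomial ℂ := X^5 + X^4 - C 5 * X^3 - C 5 * X^2 + C 4 * X + C 3

lemma Qc_eval (z : ℂ) : Qc.eval z = z^5 + z^4 - 5*z^3 - 5*z^2 + 4*z + 3 := by
  simp [Qc]

lemma Qc_eval_real (x : ℝ) : Qc.eval (x:ℂ) = ((qr x : ℝ) : ℂ) := by
  rw [Qc_eval]; unfold qr; push_cast; ring

lemma lehmer_eval (z : ℂ) (hz : z ≠ 0) : LehmerPoly.eval z = z^5 * Qc.eval (z + z⁻¹) := by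
  rw [Qc_eval]
  have hu : z * z⁻¹ = 1 := mul_inv_cancel₀ hz
  simp only [LehmerPoly, eval_add, eval_sub, eval_pow, eval_X, eval_one]
  set u := z⁻¹ with hudef
  linear_combination (-(1 + z + z*u + z^2*u + z^2*u^2 - z^3 + z^3*u^2 + z^3*u^3 - z^4 - z^4*u + z^4*u^3 + z^4*u^4 - 4*z^5 - 5*z^5*u + 4*z^5*u^2 + 5*z^5*u^3 - 5*z^6 + 6*z^6*u + 10*z^6*u^2 + 4*z^7 + 10*z^7*u + 5*z^8)) * hu

lemma Qc_natDegree : Qc.natDegree = 5 := by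
  unfold Qc; compute_degree!

lemma Qc_ne_zero : Qc ≠ 0 := by
  intro h
  have := Qc_natDegree
  rw [h] at this
  simp at this

lemma qr_cont : Continuous qr := by unfold qr; fun_prop

lemma getRoot (a b : ℝ) (hab : a ≤ b) (h1 : qr a < 0) (h2 : 0 < qr b) :
    ∃ w, w ∈ Set.Ioo a b ∧ qr w = 0 := by
  obtain ⟨w, hw, hw0⟩ := intermediate_value_Ioo hab qr_cont.continuousOn ⟨h1, h2⟩
  exact ⟨w, hw, hw0⟩

lemma getRoot' (a b : ℝ) (hab : a ≤ b) (h1 : 0 < qr a) (h2 : qr b < 0) :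
    ∃ w, w ∈ Set.Ioo a b ∧ qr w = 0 := by
  obtain ⟨w, hw, hw0⟩ := intermediate_value_Ioo' hab qr_cont.continuousOn ⟨h2, h1⟩
  exact ⟨w, hw, hw0⟩

lemma qr_strict {a b : ℝ} (ha : 2 < a) (hab : a < b) : qr a < qr b := by
  have hg : 0 < (b^4+a*b^3+a^2*b^2+a^3*b+a^4) + (b^3+a*b^2+a^2*b+a^3)
      - 5*(b^2+a*b+a^2) - 5*(a+b) + 4 := by
    nlinarith [sq_nonneg (a-2), sq_nonneg (b-2), mul_pos (sub_pos.2 ha) (sub_pos.2 (ha.trans hab)),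
      sq_nonneg (a*b-4), mul_pos (mul_pos (sub_pos.2 ha) (sub_pos.2 ha)) (sub_pos.2 (ha.trans hab))]
  have hfac : qr b - qr a = (b-a)*((b^4+a*b^3+a^2*b^2+a^3*b+a^4) + (b^3+a*b^2+a^2*b+a^3)
      - 5*(b^2+a*b+a^2) - 5*(a+b) + 4) := by unfold qr; ring
  nlinarith [mul_pos (sub_pos.2 hab) hg]

lemma qr_inj {a b : ℝ} (ha : 2 < a) (hb : 2 < b) (h : qr a = qr b) : a = b := by
  rcases lt_trichotomy a b with h'|h'|h'
  · exact absurd h (ne_of_lt (qr_strict ha h'))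
  · exact h'
  · exact absurd h.symm (ne_of_lt (qr_strict hb h'))

lemma unit_of (z : ℂ) (hz0 : z ≠ 0) (w : ℝ) (h : z + z⁻¹ = (w:ℂ))
    (h1 : -2 < w) (h2 : w < 2) : ‖z‖ = 1 := by
  have hq : z^2 - (w:ℂ) * z + 1 = 0 := by
    field_simp at h
    linear_combination h
  rw [Complex.ext_iff] at hq
  simp [pow_two, Complex.mul_re, Complex.mul_im] at hq
  obtain ⟨hre, him⟩ := hq
  have him' : z.im * (2*z.re - w) = 0 := by linear_combination him
  rcases mul_eq_zero.1 him' with hb | hb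
  · exfalso
    rw [hb] at hre
    nlinarith [sq_nonneg (2*z.re - w), mul_pos (show (0:ℝ) < 2 - w by linarith)
      (show (0:ℝ) < 2 + w by linarith)]
  · have hnsq : Complex.normSq z = 1 := by
      rw [Complex.normSq_apply]
      nlinarith [hre, hb]
    rw [Complex.norm_def, hnsq, Real.sqrt_one]


set_option maxHeartbeats 2000000 in
theorem stmt_4 :
    ∃ τ : ℝ, 1 < τ ∧ LehmerPoly.eval (τ : ℂ) = 0 ∧
      (∀ x : ℝ, 1 < x → LehmerPoly.eval (x : ℂ) = 0 → x = τ) ∧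
      LehmerPoly.eval ((τ⁻¹ : ℝ) : ℂ) = 0 ∧
      (∀ x : ℝ, 0 < x → x < 1 → LehmerPoly.eval (x : ℂ) = 0 → x = τ⁻¹) ∧
      (∀ z : ℂ, LehmerPoly.eval z = 0 → z ≠ (τ : ℂ) → z ≠ ((τ⁻¹ : ℝ) : ℂ) →
        ‖z‖ = 1) := by
  
  obtain ⟨w1, hw1, hq1⟩ := getRoot (-2) (-9/5) (by norm_num) (by norm_num [qr]) (by norm_num [qr])
  obtain ⟨w2, hw2, hq2⟩ := getRoot' (-9/5) (-1) (by norm_num) (by norm_num [qr]) (by norm_num [qr])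
  obtain ⟨w3, hw3, hq3⟩ := getRoot (-1) 0 (by norm_num) (by norm_num [qr]) (by norm_num [qr])
  obtain ⟨w4, hw4, hq4⟩ := getRoot' 0 1 (by norm_num) (by norm_num [qr]) (by norm_num [qr])
  obtain ⟨w5, hw5, hq5⟩ := getRoot 2 3 (by norm_num) (by norm_num [qr]) (by norm_num [qr])
  obtain ⟨hw1a, hw1b⟩ := hw1
  obtain ⟨hw2a, hw2b⟩ := hw2
  obtain ⟨hw3a, hw3b⟩ := hw3
  obtain ⟨hw4a, hw4b⟩ := hw4
  obtain ⟨hw5a, hw5b⟩ := hw5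
  -- classification of complex roots of Qc
  have hclass : ∀ z : ℂ, Qc.eval z = 0 →
      z = (w1:ℂ) ∨ z = (w2:ℂ) ∨ z = (w3:ℂ) ∨ z = (w4:ℂ) ∨ z = (w5:ℂ) := by
    intro z hz
    by_contra hcon
    push_neg at hcon
    obtain ⟨hz1, hz2, hz3, hz4, hz5⟩ := hcon
    have c12 : (w1:ℂ) ≠ (w2:ℂ) := by exact_mod_cast ne_of_lt (by linarith : w1 < w2)
    have c13 : (w1:ℂ) ≠ (w3:ℂ) := by exact_mod_cast ne_of_lt (by linarith : w1 < w3)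
    have c14 : (w1:ℂ) ≠ (w4:ℂ) := by exact_mod_cast ne_of_lt (by linarith : w1 < w4)
    have c15 : (w1:ℂ) ≠ (w5:ℂ) := by exact_mod_cast ne_of_lt (by linarith : w1 < w5)
    have c23 : (w2:ℂ) ≠ (w3:ℂ) := by exact_mod_cast ne_of_lt (by linarith : w2 < w3)
    have c24 : (w2:ℂ) ≠ (w4:ℂ) := by exact_mod_cast ne_of_lt (by linarith : w2 < w4)
    have c25 : (w2:ℂ) ≠ (w5:ℂ) := by exact_mod_cast ne_of_lt (by linarith : w2 < w5)
    have c34 : (w3:ℂ) ≠ (w4:ℂ) := by exact_mod_cast ne_of_lt (by linarith : w3 < w4)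
    have c35 : (w3:ℂ) ≠ (w5:ℂ) := by exact_mod_cast ne_of_lt (by linarith : w3 < w5)
    have c45 : (w4:ℂ) ≠ (w5:ℂ) := by exact_mod_cast ne_of_lt (by linarith : w4 < w5)
    set S : Finset ℂ := {z, (w1:ℂ), (w2:ℂ), (w3:ℂ), (w4:ℂ), (w5:ℂ)} with hS
    have hsub : S ⊆ Qc.roots.toFinset := by
      intro x hx
      rw [Multiset.mem_toFinset, mem_roots']
      refine ⟨Qc_ne_zero, ?_⟩
      simp only [hS, Finset.mem_insert, Finset.mem_singleton] at hx
      rcases hx with rfl|rfl|rfl|rfl|rfl|rfl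
      · exact hz
      · show Qc.eval _ = 0; rw [Qc_eval_real, hq1]; simp
      · show Qc.eval _ = 0; rw [Qc_eval_real, hq2]; simp
      · show Qc.eval _ = 0; rw [Qc_eval_real, hq3]; simp
      · show Qc.eval _ = 0; rw [Qc_eval_real, hq4]; simp
      · show Qc.eval _ = 0; rw [Qc_eval_real, hq5]; simp
    have hcard : S.card = 6 := by
      rw [hS]
      rw [Finset.card_insert_of_notMem (by simp [hz1, hz2, hz3, hz4, hz5]),
          Finset.card_insert_of_notMem (by simp [c12, c13, c14, c15]),
          Finset.card_insert_of_notMem (by simp [c23, c24, c25]),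
          Finset.card_insert_of_notMem (by simp [c34, c35]),
          Finset.card_insert_of_notMem (by simp [c45]),
          Finset.card_singleton]
    have h1 : S.card ≤ Qc.roots.toFinset.card := Finset.card_le_card hsub
    have h2 : Qc.roots.toFinset.card ≤ Multiset.card Qc.roots := Multiset.toFinset_card_le _
    have h3 : Multiset.card Qc.roots ≤ 5 := by
      have := Qc.card_roots'
      rwa [Qc_natDegree] at this
    omega
  -- define τ
  set s := Real.sqrt (w5^2 - 4) with hsdef
  have hs : s^2 = w5^2 - 4 := Real.sq_sqrt (by nlinarith)
  have hsnn : 0 ≤ s := Real.sqrt_nonneg _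
  set τ := (w5 + s)/2 with hτdef
  have hτ1 : 1 < τ := by rw [hτdef]; linarith
  have hτ0 : τ ≠ 0 := by positivity
  have h2τ : 2*τ - w5 = s := by rw [hτdef]; ring
  have hquad : τ^2 - w5*τ + 1 = 0 := by
    linear_combination ((2*τ - w5 + s)/4) * h2τ + (1/4) * hs
  have hsum : τ + τ⁻¹ = w5 := by
    field_simp
    linear_combination hquad
  have hτi : τ * τ⁻¹ = 1 := mul_inv_cancel₀ hτ0
  have hτc : (τ:ℂ) ≠ 0 := by exact_mod_cast hτ0
  have hLτ : LehmerPoly.eval (τ:ℂ) = 0 := by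
    rw [lehmer_eval _ hτc, ← Complex.ofReal_inv, ← Complex.ofReal_add, hsum,
        Qc_eval_real, hq5]
    simp
  have hsum' : τ⁻¹ + (τ⁻¹)⁻¹ = w5 := by rw [inv_inv]; linarith
  have hτinv0 : τ⁻¹ ≠ 0 := inv_ne_zero hτ0
  have hLτi : LehmerPoly.eval ((τ⁻¹ : ℝ) : ℂ) = 0 := by
    rw [lehmer_eval _ (by exact_mod_cast hτinv0), ← Complex.ofReal_inv,
        ← Complex.ofReal_add, hsum', Qc_eval_real, hq5]
    simp
  -- common: real roots give qr (x + x⁻¹) = 0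
  have hreal : ∀ x : ℝ, 0 < x → LehmerPoly.eval (x : ℂ) = 0 → qr (x + x⁻¹) = 0 := by
    intro x hx0 hLx
    have hxc : (x:ℂ) ≠ 0 := by exact_mod_cast hx0.ne'
    rw [lehmer_eval _ hxc] at hLx
    have hQ : Qc.eval ((x:ℂ) + (x:ℂ)⁻¹) = 0 := by
      rcases mul_eq_zero.1 hLx with h | h
      · exact absurd h (pow_ne_zero _ hxc)
      · exact h
    have : Qc.eval ((x + x⁻¹ : ℝ) : ℂ) = 0 := by
      rw [Complex.ofReal_add, Complex.ofReal_inv]; exact hQ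
    rw [Qc_eval_real] at this
    exact_mod_cast this
  refine ⟨τ, hτ1, hLτ, ?_, hLτi, ?_, ?_⟩
  · -- uniqueness for x > 1
    intro x hx hLx
    have hx0 : (0:ℝ) < x := by linarith
    have hxi : x * x⁻¹ = 1 := mul_inv_cancel₀ hx0.ne'
    have hQr := hreal x hx0 hLx
    have hgt2 : 2 < x + x⁻¹ := by
      nlinarith [mul_pos (sub_pos.2 hx) (sub_pos.2 hx)]
    have heqw : x + x⁻¹ = w5 := qr_inj hgt2 hw5a (by rw [hQr, hq5])
    have h := heqw.trans hsum.symm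
    have key : (x - τ)*(x*τ - 1) = 0 := by
      linear_combination (x*τ)*h - τ*hxi + x*hτi
    rcases mul_eq_zero.1 key with h' | h'
    · exact sub_eq_zero.1 h'
    · exfalso
      have hmul : x*τ = 1 := by linarith [h']
      nlinarith
  · -- uniqueness for 0 < x < 1
    intro x hx0 hx1 hLx
    have hxi : x * x⁻¹ = 1 := mul_inv_cancel₀ hx0.ne'
    have hQr := hreal x hx0 hLx
    have hgt2 : 2 < x + x⁻¹ := by
      nlinarith [mul_pos (sub_pos.2 hx1) (sub_pos.2 hx1)]
    have heqw : x + x⁻¹ = w5 := qr_inj hgt2 hw5a (by rw [hQr, hq5])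
    have h := heqw.trans hsum.symm
    have key : (x - τ)*(x*τ - 1) = 0 := by
      linear_combination (x*τ)*h - τ*hxi + x*hτi
    rcases mul_eq_zero.1 key with h' | h'
    · exfalso; have : x = τ := sub_eq_zero.1 h'; linarith
    · have hmul : x * τ = 1 := by linarith [h']
      field_simp
      linarith [hmul]
  · -- complex roots
    intro z hLz hzt hzti
    have hz0 : z ≠ 0 := by
      intro h; rw [h] at hLz; simp [LehmerPoly] at hLz
    have hQ : Qc.eval (z + z⁻¹) = 0 := by
      rw [lehmer_eval z hz0] at hLz
      rcases mul_eq_zero.1 hLz with h | h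
      · exact absurd h (pow_ne_zero _ hz0)
      · exact h
    rcases hclass _ hQ with h|h|h|h|h
    · exact unit_of z hz0 w1 h (by linarith) (by linarith)
    · exact unit_of z hz0 w2 h (by linarith) (by linarith)
    · exact unit_of z hz0 w3 h (by linarith) (by linarith)
    · exact unit_of z hz0 w4 h (by linarith) (by linarith)
    · exfalso
      have hq2' : z^2 - (w5:ℂ)*z + 1 = 0 := by
        field_simp at h
        linear_combination h
      have ctaua : (τ:ℂ) + ((τ⁻¹:ℝ):ℂ) = (w5:ℂ) := by exact_mod_cast hsum
      have ctaum : (τ:ℂ) * ((τ⁻¹:ℝ):ℂ) = 1 := by exact_mod_cast hτi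
      have key : (z - (τ:ℂ))*(z - ((τ⁻¹:ℝ):ℂ)) = 0 := by
        linear_combination hq2' - z*ctaua + ctaum
      rcases mul_eq_zero.1 key with h' | h'
      · exact hzt (sub_eq_zero.1 h')
      · exact hzti (sub_eq_zero.1 h')
end

section
/- Let A be the minimal polynomial of a Pisot number θ, of degree d, with constant coefficient a₀ and coefficients a₁, a_{d−1} of z and z^{d−1} respectively. If A is not reciprocal and a₀ = 1, then a_{d−1} ≠ a₁. -/
open Polynomial Metric Set

/-- A Pisot number: a real algebraic integer `θ > 1` all of whose other conjugates
have modulus strictly less than 1. -/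
def IsPisot (θ : ℝ) : Prop :=
  1 < θ ∧ IsIntegral ℤ θ ∧
    ∀ z : ℂ, Polynomial.aeval z (minpoly ℚ θ) = 0 → z ≠ (θ : ℂ) → ‖z‖ < 1

set_option maxHeartbeats 1000000 in
theorem stmt_9 (θ : ℝ) (hθ : IsPisot θ) (d : ℕ) (hd : (minpoly ℚ θ).natDegree = d)
    (hnotrec : Polynomial.reflect d (minpoly ℚ θ) ≠ minpoly ℚ θ)
    (hconst : (minpoly ℚ θ).coeff 0 = 1) :
    (minpoly ℚ θ).coeff (d - 1) ≠ (minpoly ℚ θ).coeff 1 := by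
  intro hEq
  obtain ⟨hθ1, hintZ, hconj⟩ := hθ
  have hθ0 : (0:ℝ) < θ := lt_trans one_pos hθ1
  have hint : IsIntegral ℚ θ := hintZ.tower_top
  set A : ℚ[X] := minpoly ℚ θ with hA
  have hmono : A.Monic := minpoly.monic hint
  have hAne : A ≠ 0 := hmono.ne_zero
  have hd1 : 1 ≤ d := hd ▸ minpoly.natDegree_pos hint
  -- complex scalars
  set θ' : ℂ := (θ:ℂ) with hθc
  have hθ'0 : θ' ≠ 0 := by
    simp only [hθc, ne_eq, Complex.ofReal_eq_zero]; exact ne_of_gt hθ0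
  have hθ'abs : ‖θ'‖ = θ := by
    rw [hθc, Complex.norm_of_nonneg hθ0.le]
  set r : ℂ := θ'⁻¹ with hrdef
  have hr0 : r ≠ 0 := inv_ne_zero hθ'0
  have hrθ : r * θ' = 1 := inv_mul_cancel₀ hθ'0
  have hrabs : ‖r‖ < 1 := by
    rw [hrdef, norm_inv, hθ'abs]
    rw [inv_lt_one_iff₀]; right; exact hθ1
  -- the complex minimal polynomial
  set P : ℂ[X] := A.map (algebraMap ℚ ℂ) with hP
  have hPeval : ∀ z : ℂ, P.eval z = Polynomial.aeval z A := fun z => by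
    rw [hP, eval_map, aeval_def]
  have hPdeg : P.natDegree = d := by rw [hP, hmono.natDegree_map, hd]
  have hP0 : P.coeff 0 = 1 := by simp [hP, coeff_map, hconst]
  have hPd : P.coeff d = 1 := by
    rw [hP, coeff_map, ← hd, hmono.coeff_natDegree]; simp
  have hPθ : P.eval θ' = 0 := by
    rw [hPeval, hθc, show ((θ:ℂ)) = algebraMap ℝ ℂ θ from rfl, aeval_algebraMap_apply,
      minpoly.aeval, map_zero]
  have hroots : ∀ z : ℂ, P.eval z = 0 → z = θ' ∨ ‖z‖ < 1 := by
    intro z hz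
    by_cases h : z = θ'
    · exact Or.inl h
    · exact Or.inr (hconj z (by rwa [hPeval] at hz) h)
  -- conjugation symmetry
  have hPconj : ∀ z : ℂ, P.eval (starRingEnd ℂ z) = starRingEnd ℂ (P.eval z) := by
    intro z
    have hmm : P = (A.map (algebraMap ℚ ℝ)).map (algebraMap ℝ ℂ) := by
      rw [hP, map_map, ← IsScalarTower.algebraMap_eq]
    have he : ∀ w : ℂ, P.eval w = Polynomial.aeval w (A.map (algebraMap ℚ ℝ)) := by
      intro w; rw [hmm, eval_map, aeval_def]
    rw [he, he, Polynomial.aeval_conj]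
  -- reflected polynomial
  set Q : ℂ[X] := reflect d P with hQ
  have hQeval : ∀ z : ℂ, z ≠ 0 → Q.eval z = z ^ d * P.eval z⁻¹ := by
    intro z hz
    have : Invertible (z⁻¹) := invertibleOfNonzero (inv_ne_zero hz)
    have h := eval₂_reflect_mul_pow (RingHom.id ℂ) z⁻¹ d P (le_of_eq hPdeg)
    simp only [invOf_eq_inv, inv_inv] at h
    have h2 : Q.eval z * (z⁻¹) ^ d = P.eval z⁻¹ := by
      exact h
    rw [← h2, inv_pow]
    field_simp
  have hQ0 : Q.coeff 0 = 1 := by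
    rw [hQ, coeff_reflect, revAt_le (Nat.zero_le d), Nat.sub_zero, hPd]
  have hQ1 : Q.coeff 1 = P.coeff 1 := by
    rw [hQ, coeff_reflect, revAt_le hd1, hP, coeff_map, coeff_map, hEq]
  have hQne : Q.eval 0 ≠ 0 := by
    rw [← coeff_zero_eq_eval_zero, hQ0]; exact one_ne_zero
  have hQr : Q.eval r = 0 := by
    rw [hQeval r hr0, hrdef, inv_inv, hPθ, mul_zero]
  -- if `reflect d A` has `θ` as a root, then `A` is reciprocal: contradiction
  have hrefl : P.eval r ≠ 0 := by
    intro h0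
    have hQθ : Q.eval θ' = 0 := by
      rw [hQeval θ' hθ'0, ← hrdef, h0, mul_zero]
    have hQmap : Q = (reflect d A).map (algebraMap ℚ ℂ) := by
      rw [hQ, hP, reflect_map]
    have haev : Polynomial.aeval θ (reflect d A) = 0 := by
      have : Polynomial.aeval θ' (reflect d A) = 0 := by
        rw [← hQθ, hQmap, eval_map, aeval_def]
      rw [hθc, show ((θ:ℂ)) = algebraMap ℝ ℂ θ from rfl, aeval_algebraMap_apply,
        Complex.coe_algebraMap, Complex.ofReal_eq_zero] at this
      exact this
    have hdvd : A ∣ reflect d A := minpoly.dvd ℚ θ haev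
    have hBne : reflect d A ≠ 0 := by
      intro h
      have : (reflect d A).coeff 0 = 0 := by rw [h]; simp
      rw [coeff_reflect, revAt_le (Nat.zero_le d), Nat.sub_zero, ← hd,
        hmono.coeff_natDegree] at this
      exact one_ne_zero this
    have hBdeg : (reflect d A).natDegree ≤ d := by
      apply natDegree_le_iff_coeff_eq_zero.mpr
      intro n hn
      rw [coeff_reflect]
      apply coeff_eq_zero_of_natDegree_lt
      rcases le_or_gt n d with h | h
      · rw [revAt_le h, hd]; omega
      · rw [revAt_eq_self_of_lt h, hd]; omega
    obtain ⟨c, hc⟩ := hdvd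
    have hcne : c ≠ 0 := by
      intro h; rw [h, mul_zero] at hc; exact hBne hc
    have hcdeg : c.natDegree = 0 := by
      have := natDegree_mul hAne hcne
      rw [← hc, hd] at this
      omega
    have hcC : c = C (c.coeff 0) := eq_C_of_natDegree_eq_zero hcdeg
    have hcoefd : (reflect d A).coeff d = 1 := by
      rw [coeff_reflect, revAt_le (le_refl d), Nat.sub_self, hconst]
    have hc1 : c.coeff 0 = 1 := by
      have : (reflect d A).coeff d = A.coeff d * c.coeff 0 := by
        conv_lhs => rw [hc, hcC]
        rw [coeff_mul_C]
      rw [hcoefd, ← hd, hmono.coeff_natDegree, one_mul] at this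
      exact this.symm
    apply hnotrec
    rw [hc, hcC, hc1, map_one, mul_one]
  -- modulus on the unit circle
  have hcirc : ∀ z : ℂ, ‖z‖ = 1 →
      ‖(Q.eval z)‖ = ‖(P.eval z)‖ := by
    intro z hz
    have hz0 : z ≠ 0 := by
      intro h; rw [h] at hz; simp at hz
    have hzinv : z⁻¹ = starRingEnd ℂ z := by
      rw [Complex.inv_def, Complex.normSq_eq_norm_sq, hz]; simp
    rw [hQeval z hz0, norm_mul, norm_pow, hz, one_pow, one_mul, hzinv, hPconj,
      Complex.norm_conj]
  have habs1 : ∀ z : ℂ, ‖z‖ = 1 →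
      ‖(θ' * z - 1)‖ = ‖(θ' - z)‖ := by
    intro z hz
    have h2 : z.re ^ 2 + z.im ^ 2 = 1 := by
      have := Complex.sq_norm z
      rw [hz] at this
      simp only [Complex.normSq_apply, one_pow] at this
      linear_combination -this
    rw [Complex.norm_def, Complex.norm_def]
    congr 1
    simp only [Complex.normSq_apply, Complex.sub_re, Complex.sub_im, Complex.mul_re,
      Complex.mul_im, hθc, Complex.ofReal_re, Complex.ofReal_im, Complex.one_re, Complex.one_im]
    linear_combination (θ^2 - 1) * h2
  -- split off the root `r` of `Q`
  obtain ⟨S, hS⟩ : ∃ S, Q = (X - C r) * S := dvd_iff_isRoot.mpr hQr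
  have hS0 : S.coeff 0 = -θ' := by
    have h1 : (1:ℂ) = -r * S.coeff 0 := by
      rw [← hQ0, hS, mul_coeff_zero]; simp
    linear_combination θ' * h1 + (-S.coeff 0) * hrθ
  have hScoeff1 : S.coeff 0 - r * S.coeff 1 = P.coeff 1 := by
    have h1 : Q.coeff 1 = S.coeff 0 - r * S.coeff 1 := by
      rw [hS, sub_mul, coeff_sub, coeff_X_mul, coeff_C_mul]
    rw [← h1, hQ1]
  -- `r` is a simple root of `Q`
  have hSr : S.eval r ≠ 0 := by
    intro h0
    have hQ'r : Q.derivative.eval r = 0 := by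
      rw [hS, derivative_mul]
      simp [h0]
    -- compute the derivative of `Q` at `r` via the functional equation
    have h1 : HasDerivAt (fun z : ℂ => Q.eval z) (Q.derivative.eval r) r := Q.hasDerivAt r
    have hp : HasDerivAt (fun z : ℂ => P.eval z⁻¹)
        (P.derivative.eval r⁻¹ * (-(r ^ 2)⁻¹)) r :=
      (P.hasDerivAt r⁻¹).comp r (hasDerivAt_inv hr0)
    have hpow : HasDerivAt (fun z : ℂ => z ^ d) ((d:ℂ) * r ^ (d-1)) r := hasDerivAt_pow d r
    have h2 : HasDerivAt (fun z : ℂ => z ^ d * P.eval z⁻¹)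
        ((d:ℂ) * r ^ (d-1) * P.eval r⁻¹ + r ^ d * (P.derivative.eval r⁻¹ * (-(r ^ 2)⁻¹))) r :=
      hpow.mul hp
    have h3 : (fun z : ℂ => Q.eval z) =ᶠ[nhds r] (fun z : ℂ => z ^ d * P.eval z⁻¹) := by
      filter_upwards [IsOpen.mem_nhds isOpen_ne hr0] with z hz
      exact hQeval z hz
    have h4 := h1.unique (h2.congr_of_eventuallyEq h3)
    rw [hQ'r, hrdef, inv_inv, hPθ] at h4
    have h5 : P.derivative.eval θ' = 0 := by
      have hrne : ((θ'⁻¹ : ℂ) ^ 2)⁻¹ ≠ 0 := by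
        simp [hθ'0]
      have hrdne : (θ'⁻¹ : ℂ) ^ d ≠ 0 := pow_ne_zero _ (inv_ne_zero hθ'0)
      simpa [hθ'0] using h4.symm
    -- contradiction with separability of `A`
    obtain ⟨u, v, huv⟩ := (minpoly.irreducible hint).separable
    have := congrArg (Polynomial.aeval θ') huv
    simp only [map_add, map_mul, map_one] at this
    rw [show Polynomial.aeval θ' A = P.eval θ' from (hPeval θ').symm, hPθ] at this
    have hder : Polynomial.aeval θ' (derivative A) = P.derivative.eval θ' := by
      rw [hP, derivative_map, eval_map, aeval_def]
    rw [hder, h5] at this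
    simp at this
  -- `S` does not vanish on the closed unit disk
  have hSne : ∀ z : ℂ, ‖z‖ ≤ 1 → S.eval z ≠ 0 := by
    intro z hz h0
    have hQz : Q.eval z = 0 := by rw [hS]; simp [h0]
    have hz0 : z ≠ 0 := by
      intro h; rw [h] at hQz; exact hQne hQz
    rw [hQeval z hz0] at hQz
    have hPz : P.eval z⁻¹ = 0 := by
      rcases mul_eq_zero.mp hQz with h | h
      · exact absurd h (pow_ne_zero _ hz0)
      · exact h
    rcases hroots _ hPz with h | h
    · have : z = r := by
        rw [hrdef, ← h, inv_inv]
      rw [this] at h0; exact hSr h0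
    · rw [norm_inv] at h
      have h1 : 1 < ‖z‖ := by
        have hzpos : 0 < ‖z‖ := by
          exact norm_pos_iff.mpr hz0
        rw [inv_lt_one_iff₀] at h
        rcases h with h | h
        · exfalso; linarith
        · exact h
      linarith
  -- the rational function g
  set Dp : ℂ[X] := S * (C θ' - X) with hDpdef
  set Np : ℂ[X] := C θ' * P with hNpdef
  have hθz : ∀ z : ℂ, ‖z‖ ≤ 1 → θ' - z ≠ 0 := by
    intro z hz h
    rw [sub_eq_zero] at h
    rw [← h, hθ'abs] at hz
    linarith
  have hDpne : ∀ z : ℂ, ‖z‖ ≤ 1 → Dp.eval z ≠ 0 := by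
    intro z hz
    rw [hDpdef]
    simp only [eval_mul, eval_sub, eval_C, eval_X]
    exact mul_ne_zero (hSne z hz) (hθz z hz)
  set g : ℂ → ℂ := fun z => Np.eval z / Dp.eval z with hgdef
  set w₀ : ℂ := -r with hw₀def
  have hw₀abs : ‖w₀‖ < 1 := by
    rw [hw₀def]
    simpa using hrabs
  have hw₀real : w₀ = ((-θ⁻¹ : ℝ) : ℂ) := by
    rw [hw₀def, hrdef, hθc]
    push_cast
    ring
  have hDp0 : Dp.eval 0 = -θ' ^ 2 := by
    rw [← coeff_zero_eq_eval_zero, hDpdef, mul_coeff_zero, hS0, coeff_sub, coeff_C_zero,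
      coeff_X_zero]
    ring
  have hNp0 : Np.eval 0 = θ' := by
    rw [← coeff_zero_eq_eval_zero, hNpdef, coeff_C_mul, hP0, mul_one]
  have hg0 : g 0 = w₀ := by
    simp only [hgdef]
    rw [hNp0, hDp0, hw₀def, hrdef]
    rw [div_eq_iff (by simpa using pow_ne_zero 2 hθ'0)]
    field_simp
  have hder0 : ∀ p : ℂ[X], p.derivative.eval 0 = p.coeff 1 := by
    intro p
    rw [← coeff_zero_eq_eval_zero, coeff_derivative]
    simp
  have hNp1 : Np.coeff 1 = θ' * P.coeff 1 := by rw [hNpdef, coeff_C_mul]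
  have hDp1 : Dp.coeff 1 = θ' * S.coeff 1 + θ' := by
    have hDd : Dp = C θ' * S - S * X := by rw [hDpdef]; ring
    rw [hDd, coeff_sub, coeff_C_mul, coeff_mul_X, hS0]
    ring
  have hw₀sq : (1 : ℂ) - w₀ ^ 2 ≠ 0 := by
    intro h
    have h1 : w₀ ^ 2 = 1 := by linear_combination -h
    have h2 : ‖(w₀ ^ 2)‖ = 1 := by rw [h1]; simp
    rw [norm_pow] at h2
    nlinarith [hw₀abs, norm_nonneg w₀]
  have hgderiv : HasDerivAt g (1 - w₀ ^ 2) 0 := by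
    have h1 : HasDerivAt g ((Np.derivative.eval 0 * Dp.eval 0 - Np.eval 0 * Dp.derivative.eval 0)
        / (Dp.eval 0) ^ 2) 0 := by
      simp only [hgdef]
      exact (Np.hasDerivAt 0).div (Dp.hasDerivAt 0) (hDpne 0 (by simp))
    convert h1 using 1
    rw [hder0, hder0, hNp0, hDp0, hNp1, hDp1, ← hScoeff1, hS0, hw₀def, hrdef]
    field_simp
    ring
  have hgdAt : ∀ z : ℂ, ‖z‖ ≤ 1 → DifferentiableAt ℂ g z := by
    intro z hz
    simp only [hgdef]
    exact (Np.differentiableAt).div (Dp.differentiableAt) (hDpne z hz)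
  have hgDiffBall : DifferentiableOn ℂ g (ball 0 1) := by
    intro z hz
    exact (hgdAt z (le_of_lt (by simpa using mem_ball_zero_iff.mp hz))).differentiableWithinAt
  have hgcl : DiffContOnCl ℂ g (ball (0:ℂ) 1) := by
    apply DifferentiableOn.diffContOnCl
    rw [closure_ball (0:ℂ) one_ne_zero]
    intro z hz
    exact (hgdAt z (by simpa using mem_closedBall_zero_iff.mp hz)).differentiableWithinAt
  have hgbnd : ∀ z ∈ frontier (ball (0:ℂ) 1), ‖g z‖ ≤ 1 := by
    rw [frontier_ball (0:ℂ) one_ne_zero]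
    intro z hz
    have hz1 : ‖z‖ = 1 := by
      simpa using mem_sphere_zero_iff_norm.mp hz
    have hzr : ‖(z - r)‖ ≠ 0 := by
      rw [ne_eq, norm_eq_zero, sub_eq_zero]
      intro h
      rw [← h] at hrabs
      rw [hz1] at hrabs
      linarith
    have l1 : ‖(Np.eval z)‖ = θ * ‖(P.eval z)‖ := by
      rw [hNpdef]
      simp only [eval_mul, eval_C, norm_mul, hθ'abs]
    have l2 : ‖(Dp.eval z)‖ = ‖(S.eval z)‖ * ‖(θ' - z)‖ := by
      rw [hDpdef]
      simp only [eval_mul, eval_sub, eval_C, eval_X, norm_mul]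
    have l3 : ‖(Q.eval z)‖ = ‖(z - r)‖ * ‖(S.eval z)‖ := by
      rw [hS]
      simp only [eval_mul, eval_sub, eval_C, eval_X, norm_mul]
    have l4 : θ * ‖(z - r)‖ = ‖(θ' * z - 1)‖ := by
      have : θ' * (z - r) = θ' * z - 1 := by
        rw [hrdef]
        field_simp
      rw [← this, norm_mul, hθ'abs]
    have e2 : ‖(Np.eval z)‖ * ‖(z - r)‖
        = ‖(Dp.eval z)‖ * ‖(z - r)‖ := by
      rw [l1, l2]
      calc θ * ‖(P.eval z)‖ * ‖(z - r)‖
          = ‖(P.eval z)‖ * (θ * ‖(z - r)‖) := by ring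
        _ = ‖(P.eval z)‖ * ‖(θ' * z - 1)‖ := by rw [l4]
        _ = ‖(P.eval z)‖ * ‖(θ' - z)‖ := by rw [habs1 z hz1]
        _ = ‖(Q.eval z)‖ * ‖(θ' - z)‖ := by rw [hcirc z hz1]
        _ = ‖(z - r)‖ * ‖(S.eval z)‖ * ‖(θ' - z)‖ := by rw [l3]
        _ = ‖(S.eval z)‖ * ‖(θ' - z)‖ * ‖(z - r)‖ := by ring
    have e3 : ‖(Np.eval z)‖ = ‖(Dp.eval z)‖ :=
      mul_right_cancel₀ hzr e2
    have hDz : ‖(Dp.eval z)‖ ≠ 0 := by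
      rw [ne_eq, norm_eq_zero]
      exact hDpne z (le_of_eq hz1)
    simp only [hgdef]
    rw [norm_div, e3, div_self hDz]
  have hgle : ∀ z ∈ closedBall (0:ℂ) 1, ‖(g z)‖ ≤ 1 := by
    intro z hz
    rw [← closure_ball (0:ℂ) one_ne_zero] at hz
    simpa using
      Complex.norm_le_of_forall_mem_frontier_norm_le isBounded_ball hgcl hgbnd hz
  have hglt : ∀ z ∈ ball (0:ℂ) 1, ‖(g z)‖ < 1 := by
    intro z hz
    by_contra hcon
    push_neg at hcon
    have heq1 : ‖(g z)‖ = 1 :=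
      le_antisymm (hgle z (ball_subset_closedBall hz)) hcon
    have hmax : IsMaxOn (norm ∘ g) (ball (0:ℂ) 1) z := by
      apply isMaxOn_iff.mpr
      intro y hy
      simp only [Function.comp_apply, heq1]
      exact hgle y (ball_subset_closedBall hy)
    have hcst := Complex.eqOn_of_isPreconnected_of_isMaxOn_norm
      (convex_ball (0:ℂ) 1).isPreconnected isOpen_ball hgDiffBall hz hmax
      (mem_ball_self one_pos)
    have habsw : ‖w₀‖ = 1 := by
      rw [← hg0]
      have : g 0 = g z := hcst
      rw [this, heq1]
    linarith
  -- the Möbius transform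
  have hmoeb : ∀ (t : ℝ) (w : ℂ), Complex.normSq (1 - (t:ℂ) * w) - Complex.normSq (w - (t:ℂ))
      = (1 - t ^ 2) * (1 - Complex.normSq w) := by
    intro t w
    simp only [Complex.normSq_apply, Complex.sub_re, Complex.sub_im, Complex.mul_re,
      Complex.mul_im, Complex.ofReal_re, Complex.ofReal_im, Complex.one_re, Complex.one_im]
    ring
  have ht2 : (-θ⁻¹ : ℝ) ^ 2 < 1 := by
    have h1 : θ⁻¹ < 1 := by
      rw [inv_lt_one_iff₀]; right; exact hθ1
    have h0 : 0 < θ⁻¹ := inv_pos.mpr hθ0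
    nlinarith
  have hkey : ∀ w : ℂ, ‖w‖ < 1 → ‖((w - w₀) / (1 - w₀ * w))‖ < 1 := by
    intro w hw
    have hnw : Complex.normSq w < 1 := by
      nlinarith [norm_nonneg w, hw, Complex.sq_norm w]
    have hmo := hmoeb (-θ⁻¹) w
    rw [← hw₀real] at hmo
    have hpos : 0 < (1 - (-θ⁻¹ : ℝ) ^ 2) * (1 - Complex.normSq w) :=
      mul_pos (by linarith) (by linarith)
    have h1 : Complex.normSq (w - w₀) < Complex.normSq (1 - w₀ * w) := by linarith
    have h2 : ‖(w - w₀)‖ < ‖(1 - w₀ * w)‖ := by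
      rw [Complex.norm_def, Complex.norm_def]
      exact Real.sqrt_lt_sqrt (Complex.normSq_nonneg _) h1
    rw [norm_div, div_lt_one (lt_of_le_of_lt (norm_nonneg _) h2)]
    exact h2
  have hdenne : ∀ w : ℂ, ‖w‖ < 1 → (1 : ℂ) - w₀ * w ≠ 0 := by
    intro w hw h
    have h1 : w₀ * w = 1 := by linear_combination -h
    have h2 : ‖(w₀ * w)‖ = 1 := by rw [h1]; simp
    rw [norm_mul] at h2
    nlinarith [hw₀abs, hw, norm_nonneg w₀, norm_nonneg w]
  set F : ℂ → ℂ := fun z => (g z - w₀) / (1 - w₀ * g z) with hFdef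
  have hF0 : F 0 = 0 := by
    simp only [hFdef]
    rw [hg0]
    simp
  have hFdiff : DifferentiableOn ℂ F (ball (0:ℂ) 1) := by
    intro z hz
    have hgz : ‖(g z)‖ < 1 := hglt z hz
    have hg' : DifferentiableAt ℂ g z :=
      hgdAt z (le_of_lt (by simpa using mem_ball_zero_iff.mp hz))
    have : DifferentiableAt ℂ F z := by
      simp only [hFdef]
      exact (hg'.sub_const w₀).div ((hg'.const_mul w₀).const_sub 1) (hdenne (g z) hgz)
    exact this.differentiableWithinAt
  have hFmaps : Set.MapsTo F (ball (0:ℂ) 1) (ball (F 0) 1) := by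
    intro z hz
    rw [hF0, mem_ball_zero_iff]
    exact hkey (g z) (hglt z hz)
  have hFderiv : HasDerivAt F 1 0 := by
    have hnum : HasDerivAt (fun z => g z - w₀) (1 - w₀ ^ 2) 0 := hgderiv.sub_const w₀
    have hden : HasDerivAt (fun z => 1 - w₀ * g z) (-(w₀ * (1 - w₀ ^ 2))) 0 := by
      simpa using (hgderiv.const_mul w₀).const_sub 1
    have hdenne0 : (1 : ℂ) - w₀ * g 0 ≠ 0 := by rw [hg0, ← sq]; exact hw₀sq
    have hdd := hnum.div hden hdenne0
    have hval : ((1 - w₀ ^ 2) * (1 - w₀ * g 0) - (g 0 - w₀) * -(w₀ * (1 - w₀ ^ 2)))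
        / (1 - w₀ * g 0) ^ 2 = 1 := by
      rw [hg0, ← sq]
      field_simp
      ring
    rw [hval] at hdd
    exact hdd
  have hdsl : ‖dslope F 0 0‖ = 1 / 1 := by
    rw [dslope_same, hFderiv.deriv]
    simp
  have hEqOn := Complex.affine_of_mapsTo_ball_of_exists_norm_dslope_eq_div
    hFdiff (hFmaps.mono_right ball_subset_closedBall) (mem_ball_self one_pos) hdsl
  have hFz : ∀ z ∈ ball (0:ℂ) 1, F z = z := by
    intro z hz
    have h1 := hEqOn hz
    simp only [hF0, dslope_same, hFderiv.deriv, smul_eq_mul, sub_zero, mul_one, zero_add] at h1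
    exact h1
  -- translate into a polynomial identity
  have hball_eval : ∀ z ∈ ball (0:ℂ) 1,
      (Np - C w₀ * Dp).eval z = (X * (Dp - C w₀ * Np)).eval z := by
    intro z hz
    have hzle : ‖z‖ ≤ 1 :=
      le_of_lt (by simpa using mem_ball_zero_iff.mp hz)
    have hD := hDpne z hzle
    have hgz : ‖(g z)‖ < 1 := hglt z hz
    have hden := hdenne (g z) hgz
    have h1 : g z - w₀ = z * (1 - w₀ * g z) := by
      have h0 := hFz z hz
      simp only [hFdef] at h0
      rw [div_eq_iff hden] at h0
      linear_combination h0
    have hgz' : g z = Np.eval z / Dp.eval z := by simp only [hgdef]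
    rw [hgz'] at h1
    field_simp at h1
    simp only [eval_mul, eval_sub, eval_C, eval_X]
    linear_combination h1
  have hLR : Np - C w₀ * Dp = X * (Dp - C w₀ * Np) := by
    apply eq_of_infinite_eval_eq
    apply Set.infinite_of_injective_forall_mem (f := fun n : ℕ => ((n : ℂ) + 2)⁻¹)
    · intro a b hab
      have h1 : ((a : ℂ) + 2) = ((b : ℂ) + 2) := inv_injective hab
      have h2 : (a : ℂ) = b := by linear_combination h1
      exact_mod_cast h2
    · intro n
      have hmem : ((n : ℂ) + 2)⁻¹ ∈ ball (0:ℂ) 1 := by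
        rw [mem_ball_zero_iff, norm_inv]
        have hcast : ((n : ℂ) + 2) = ((n + 2 : ℕ) : ℂ) := by push_cast; ring
        have hbig : (1:ℝ) < ‖(n : ℂ) + 2‖ := by
          rw [hcast, Complex.norm_natCast]
          exact_mod_cast (by omega : 1 < n + 2)
        rw [inv_lt_one_iff₀]
        right
        exact hbig
      exact hball_eval _ hmem
  -- conclude that P = Q
  have hCw : (C w₀ : ℂ[X]) * C θ' = -1 := by
    rw [← C_mul, hw₀def]
    have h1 : -r * θ' = -1 := by linear_combination -hrθ
    rw [h1]
    simp
  have hfac : (P - S * (X + C w₀)) * (1 + C w₀ * X) = 0 := by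
    rw [hNpdef, hDpdef] at hLR
    linear_combination (-(C w₀ : ℂ[X])) * hLR + (P * (1 + C w₀ * X) - S * (X + C w₀)) * hCw
  have hne1 : (1 + C w₀ * X : ℂ[X]) ≠ 0 := by
    intro h
    have h1 := congrArg (fun p : ℂ[X] => coeff p 0) h
    simp at h1
  have hPS : P = S * (X + C w₀) := by
    rcases mul_eq_zero.mp hfac with h | h
    · exact sub_eq_zero.mp h
    · exact absurd h hne1
  have hPQ : P = Q := by
    rw [hPS, hS, hw₀def, map_neg]
    ring
  apply hnotrec
  have hfin : (reflect d A).map (algebraMap ℚ ℂ) = A.map (algebraMap ℚ ℂ) := by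
    rw [← reflect_map, ← hP, ← hQ, hPQ]
  exact Polynomial.map_injective _ (algebraMap ℚ ℂ).injective hfin
end

section
/- Let P, Q ∈ ℝ[z] be coprime of the same degree with positive leading coefficients, P reciprocal, Q antireciprocal, all roots of P and Q simple and lying on the unit circle, and the roots of P and Q interlacing on the unit circle. Then every root of P² + Q² lies on the unit circle. -/
open Polynomial Complex Finset

lemma factor_lemma (F : Polynomial ℂ) (d : ℕ) (hd : F.natDegree = d) (hF : F ≠ 0)
    (r : ℕ → ℂ) (hinj : ∀ i < d, ∀ j < d, r i = r j → i = j)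
    (hroot : ∀ j < d, F.eval (r j) = 0) :
    F = C F.leadingCoeff * ∏ j ∈ Finset.range d, (X - C (r j)) := by
  have hnod : ((Finset.range d).val.map r).Nodup := by
    refine Multiset.Nodup.map_on ?_ (Finset.range d).nodup
    intro i hi j hj h
    exact hinj i (Finset.mem_range.1 hi) j (Finset.mem_range.1 hj) h
  have hle : ((Finset.range d).val.map r) ≤ F.roots := by
    rw [Multiset.le_iff_count]
    intro a
    by_cases ha : a ∈ (Finset.range d).val.map r
    · have h1 : ((Finset.range d).val.map r).count a ≤ 1 :=
        Multiset.nodup_iff_count_le_one.1 hnod a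
      refine le_trans h1 ?_
      rw [Multiset.one_le_count_iff_mem, mem_roots hF]
      obtain ⟨j, hj, rfl⟩ := Multiset.mem_map.1 ha
      exact hroot j (Finset.mem_range.1 hj)
    · rw [Multiset.count_eq_zero_of_notMem ha]
      exact Nat.zero_le _
  have hcard : F.roots.card ≤ d := hd ▸ F.card_roots'
  have heq : ((Finset.range d).val.map r) = F.roots := by
    apply Multiset.eq_of_le_of_card_le hle
    simpa using hcard
  have h2 := (Polynomial.C_leadingCoeff_mul_prod_multiset_X_sub_C (IsAlgClosed.card_roots_eq_natDegree (p := F))).symm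
  conv_lhs => rw [h2, ← heq, Multiset.map_map]
  rfl

lemma root_mem (F : Polynomial ℂ) (d : ℕ) (hd : F.natDegree = d) (hF : F ≠ 0)
    (r : ℕ → ℂ) (hinj : ∀ i < d, ∀ j < d, r i = r j → i = j)
    (hroot : ∀ j < d, F.eval (r j) = 0) (w : ℂ) (hw : F.eval w = 0) :
    ∃ j < d, w = r j := by
  have h := factor_lemma F d hd hF r hinj hroot
  rw [h] at hw
  simp only [eval_mul, eval_C, eval_prod, eval_sub, eval_X, mul_eq_zero] at hw
  rcases hw with h0 | h0
  · exact absurd h0 (by simpa [leadingCoeff_eq_zero] using hF)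
  · obtain ⟨j, hj, hj0⟩ := Finset.prod_eq_zero_iff.1 h0
    exact ⟨j, Finset.mem_range.1 hj, sub_eq_zero.1 hj0⟩

lemma exp_sub_exp (a b : ℝ) : Complex.exp ((a:ℂ)*I) - Complex.exp ((b:ℂ)*I)
    = Complex.exp ((((a+b)/2 : ℝ):ℂ)*I) * (2*I*(Real.sin ((a-b)/2) : ℂ)) := by
  have e1 : Complex.exp ((((a+b)/2 : ℝ):ℂ)*I) * Complex.exp ((((a-b)/2 : ℝ):ℂ)*I)
      = Complex.exp ((a:ℂ)*I) := by
    rw [← Complex.exp_add]; congr 1; push_cast; ring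
  have e2 : Complex.exp ((((a+b)/2 : ℝ):ℂ)*I) * Complex.exp (-((((a-b)/2 : ℝ):ℂ)*I))
      = Complex.exp ((b:ℂ)*I) := by
    rw [← Complex.exp_add]; congr 1; push_cast; ring
  rw [Complex.ofReal_sin, Complex.sin, ← e1, ← e2]
  have : -(((a-b)/2 : ℝ):ℂ) * I = -((((a-b)/2 : ℝ):ℂ) * I) := by ring
  rw [this]
  linear_combination (Complex.exp ((((a+b)/2 : ℝ):ℂ)*I) *
    (Complex.exp ((((a-b)/2 : ℝ):ℂ)*I) - Complex.exp (-((((a-b)/2 : ℝ):ℂ)*I)))) * Complex.I_sq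

lemma prod_exp_sub (d : ℕ) (φ : ℕ → ℝ) (t : ℝ) :
    ∏ j ∈ Finset.range d, (Complex.exp ((t:ℂ)*I) - Complex.exp ((φ j : ℂ) * I))
      = (2*I)^d * Complex.exp (((∑ j ∈ Finset.range d, φ j)/2 : ℝ) * I)
        * Complex.exp (((d*t/2 : ℝ) : ℂ) * I)
        * ∏ j ∈ Finset.range d, (Real.sin ((t - φ j)/2) : ℂ) := by
  have h1 : ∀ j ∈ Finset.range d, Complex.exp ((t:ℂ)*I) - Complex.exp ((φ j : ℂ) * I)
      = Complex.exp ((((t + φ j)/2 : ℝ):ℂ)*I) * (2*I*(Real.sin ((t - φ j)/2) : ℂ)) :=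
    fun j _ => exp_sub_exp t (φ j)
  rw [Finset.prod_congr rfl h1, Finset.prod_mul_distrib, Finset.prod_mul_distrib,
    Finset.prod_const, ← Complex.exp_sum]
  have h2 : ∑ j ∈ Finset.range d, ((((t + φ j)/2 : ℝ):ℂ)*I)
      = (((∑ j ∈ Finset.range d, φ j)/2 : ℝ) : ℂ) * I + ((d*t/2 : ℝ) : ℂ) * I := by
    rw [← Finset.sum_mul]
    push_cast
    rw [← Finset.sum_div, Finset.sum_add_distrib, Finset.sum_const, Finset.card_range,
      nsmul_eq_mul]
    ring
  rw [h2, Complex.exp_add]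
  simp only [Finset.card_range]
  ring

lemma circle_form (P : Polynomial ℝ) (d : ℕ) (hd : P.natDegree = d)
    (hP0 : P ≠ 0) (φ : ℕ → ℝ)
    (hinj : ∀ i < d, ∀ j < d,
      Complex.exp ((φ i : ℂ) * I) = Complex.exp ((φ j : ℂ) * I) → i = j)
    (hroot : ∀ j < d, aeval (Complex.exp ((φ j : ℂ) * I)) P = 0) :
    ∃ Cc : ℂ, Cc ≠ 0 ∧ ∀ t : ℝ, aeval (Complex.exp ((t:ℂ)*I)) P
       = Cc * Complex.exp (((d*t/2 : ℝ):ℂ) * I)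
         * ∏ j ∈ Finset.range d, (Real.sin ((t - φ j)/2) : ℂ) := by
  set F := P.map (algebraMap ℝ ℂ) with hFdef
  have hF0 : F ≠ 0 := by
    rw [hFdef, Ne, Polynomial.map_eq_zero_iff (algebraMap ℝ ℂ).injective]
    exact hP0
  have hFd : F.natDegree = d := by rw [hFdef, natDegree_map]; exact hd
  have hev : ∀ z : ℂ, F.eval z = aeval z P := by
    intro z; rw [hFdef, eval_map, aeval_def]
  have hfac := factor_lemma F d hFd hF0 (fun j => Complex.exp ((φ j : ℂ) * I)) hinj
    (fun j hj => by rw [hev]; exact hroot j hj)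
  refine ⟨F.leadingCoeff * (2*I)^d
    * Complex.exp (((∑ j ∈ Finset.range d, φ j)/2 : ℝ) * I), ?_, ?_⟩
  · exact mul_ne_zero (mul_ne_zero (by rwa [Ne, leadingCoeff_eq_zero])
      (pow_ne_zero _ (by simp [Complex.I_ne_zero]))) (Complex.exp_ne_zero _)
  · intro t
    have hstep : aeval (Complex.exp ((t:ℂ)*I)) P
        = F.leadingCoeff * ∏ j ∈ Finset.range d,
            (Complex.exp ((t:ℂ)*I) - Complex.exp ((φ j : ℂ) * I)) := by
      rw [← hev]
      conv_lhs => rw [hfac]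
      simp only [eval_mul, eval_C, eval_prod, eval_sub, eval_X]
    rw [hstep, prod_exp_sub d φ t]
    ring

lemma conj_const (P : Polynomial ℝ) (d : ℕ) (hd : P.natDegree = d) (σ : ℝ)
    (hrefl : Polynomial.reflect d P = σ • P) (Cc : ℂ) (φ : ℕ → ℝ)
    (hform : ∀ t : ℝ, aeval (Complex.exp ((t:ℂ)*I)) P
       = Cc * Complex.exp (((d*t/2 : ℝ):ℂ) * I)
         * ∏ j ∈ Finset.range d, (Real.sin ((t - φ j)/2) : ℂ))
    (hσ : (σ:ℂ) * (σ:ℂ) = 1)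
    (t₀ : ℝ) (ht₀ : ∀ j < d, Real.sin ((t₀ - φ j)/2) ≠ 0) :
    (starRingEnd ℂ) Cc = (σ:ℂ) * Cc := by
  set z := Complex.exp (((t₀:ℝ):ℂ)*I) with hz
  haveI : Invertible z := invertibleOfNonzero (Complex.exp_ne_zero _)
  have hfe := Polynomial.eval₂_reflect_mul_pow (algebraMap ℝ ℂ) z d P hd.le
  rw [hrefl] at hfe
  have hsmul : Polynomial.eval₂ (algebraMap ℝ ℂ) (⅟z) (σ • P)
      = (σ:ℂ) * aeval (⅟z) P := by
    rw [Polynomial.smul_eq_C_mul, Polynomial.eval₂_mul, Polynomial.eval₂_C, aeval_def]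
    rfl
  rw [hsmul] at hfe
  -- hfe : (σ:ℂ) * aeval (⅟z) P * z^d = eval₂ _ z P
  have hinv : (⅟z : ℂ) = (starRingEnd ℂ) z := by
    rw [invOf_eq_inv, hz, ← Complex.exp_conj, ← Complex.exp_neg]
    congr 1
    rw [map_mul, Complex.conj_ofReal, Complex.conj_I]
    ring
  have hconj : aeval ((starRingEnd ℂ) z) P = (starRingEnd ℂ) (aeval z P) :=
    Polynomial.aeval_conj P z
  rw [hinv, hconj] at hfe
  -- hfe : σ * conj (aeval z P) * z ^ d = eval₂ _ z P
  have hfe2 : (σ:ℂ) * (starRingEnd ℂ) (aeval z P) * z ^ d = aeval z P := by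
    rw [hfe, aeval_def]
  set s : ℝ := ∏ j ∈ Finset.range d, Real.sin ((t₀ - φ j)/2) with hs
  have hsne : s ≠ 0 := Finset.prod_ne_zero_iff.2 fun j hj => ht₀ j (Finset.mem_range.1 hj)
  have hsc : ∏ j ∈ Finset.range d, (Real.sin ((t₀ - φ j)/2) : ℂ) = (s:ℂ) := by
    rw [hs, Complex.ofReal_prod]
  have hE2 : z ^ d = Complex.exp (((d*t₀/2 : ℝ):ℂ) * I) * Complex.exp (((d*t₀/2 : ℝ):ℂ) * I) := by
    rw [← Complex.exp_add, hz, ← Complex.exp_nat_mul]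
    congr 1
    push_cast
    ring
  have hform₀ := hform t₀
  rw [hsc] at hform₀
  rw [hform₀, hE2] at hfe2
  have hconjprod : (starRingEnd ℂ) (Cc * Complex.exp (((d*t₀/2 : ℝ):ℂ) * I) * (s:ℂ))
      = (starRingEnd ℂ) Cc * Complex.exp (-(((d*t₀/2 : ℝ):ℂ) * I)) * (s:ℂ) := by
    rw [map_mul, map_mul, ← Complex.exp_conj, Complex.conj_ofReal]
    congr 2
    rw [map_mul, Complex.conj_ofReal, Complex.conj_I]
    ring
  rw [hconjprod] at hfe2
  have hexpne := Complex.exp_ne_zero (((d*t₀/2 : ℝ):ℂ) * I)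
  have hexp2 : Complex.exp (-(((d*t₀/2 : ℝ):ℂ) * I)) * Complex.exp (((d*t₀/2 : ℝ):ℂ) * I) = 1 := by
    rw [← Complex.exp_add]; simp
  have hcan : ((σ:ℂ) * ((starRingEnd ℂ) Cc) - Cc) * (Complex.exp (((d*t₀/2 : ℝ):ℂ) * I) * (s:ℂ)) = 0 := by
    have : (σ:ℂ) * ((starRingEnd ℂ) Cc * Complex.exp (-(((d*t₀/2 : ℝ):ℂ) * I)) * (s:ℂ))
        * (Complex.exp (((d*t₀/2 : ℝ):ℂ) * I) * Complex.exp (((d*t₀/2 : ℝ):ℂ) * I))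
        - Cc * Complex.exp (((d*t₀/2 : ℝ):ℂ) * I) * (s:ℂ) = 0 := by rw [hfe2]; ring
    calc ((σ:ℂ) * ((starRingEnd ℂ) Cc) - Cc) * (Complex.exp (((d*t₀/2 : ℝ):ℂ) * I) * (s:ℂ))
        = (σ:ℂ) * ((starRingEnd ℂ) Cc * Complex.exp (-(((d*t₀/2 : ℝ):ℂ) * I)) * (s:ℂ))
        * (Complex.exp (((d*t₀/2 : ℝ):ℂ) * I) * Complex.exp (((d*t₀/2 : ℝ):ℂ) * I))
        - Cc * Complex.exp (((d*t₀/2 : ℝ):ℂ) * I) * (s:ℂ) := by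
          rw [show (σ:ℂ) * ((starRingEnd ℂ) Cc * Complex.exp (-(((d*t₀/2 : ℝ):ℂ) * I)) * (s:ℂ))
            * (Complex.exp (((d*t₀/2 : ℝ):ℂ) * I) * Complex.exp (((d*t₀/2 : ℝ):ℂ) * I))
            = (σ:ℂ) * ((starRingEnd ℂ) Cc) * (Complex.exp (-(((d*t₀/2 : ℝ):ℂ) * I))
              * Complex.exp (((d*t₀/2 : ℝ):ℂ) * I)) * Complex.exp (((d*t₀/2 : ℝ):ℂ) * I) * (s:ℂ)
            from by ring, hexp2]
          ring
      _ = 0 := this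
  rcases mul_eq_zero.1 hcan with h | h
  · linear_combination (σ:ℂ) * h - (starRingEnd ℂ) Cc * hσ
  · exact absurd h (mul_ne_zero hexpne (by exact_mod_cast hsne))

lemma ivt_zero (H : ℝ → ℝ) (hc : Continuous H) (a b : ℝ) (hab : a < b)
    (hs : H a * H b < 0) : ∃ u, a < u ∧ u < b ∧ H u = 0 := by
  rcases lt_or_ge (H a) 0 with ha | ha
  · have hb : 0 < H b := by nlinarith
    obtain ⟨u, hu, hu0⟩ := intermediate_value_Ioo hab.le hc.continuousOn
      (Set.mem_Ioo.2 ⟨ha, hb⟩)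
    exact ⟨u, hu.1, hu.2, hu0⟩
  · have ha' : 0 < H a := by
      rcases eq_or_lt_of_le ha with h | h
      · exact absurd hs (by rw [← h]; simp)
      · exact h
    have hb : H b < 0 := by nlinarith
    obtain ⟨u, hu, hu0⟩ := intermediate_value_Ioo' hab.le hc.continuousOn
      (Set.mem_Ioo.2 ⟨hb, ha'⟩)
    exact ⟨u, hu.1, hu.2, hu0⟩

lemma find_zeros (H : ℝ → ℝ) (hc : Continuous H) (d : ℕ) (a b : ℕ → ℝ)
    (hab : ∀ j < d, a j < b j)
    (hsgn : ∀ j < d, H (a j) * H (b j) < 0) :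
    ∃ u : ℕ → ℝ, ∀ j < d, a j < u j ∧ u j < b j ∧ H (u j) = 0 := by
  have h := fun j (hj : j < d) => ivt_zero H hc (a j) (b j) (hab j hj) (hsgn j hj)
  choose! u h1 h2 h3 using h
  exact ⟨u, fun j hj => ⟨h1 j hj, h2 j hj, h3 j hj⟩⟩

lemma prod_sign (d m : ℕ) (hm : m ≤ d) (f : ℕ → ℝ)
    (h1 : ∀ k < m, 0 < f k) (h2 : ∀ k, m ≤ k → k < d → f k < 0) :
    0 < (-1:ℝ)^(d - m) * ∏ k ∈ Finset.range d, f k := by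
  rw [← Finset.prod_range_mul_prod_Ico f hm]
  have hp1 : 0 < ∏ k ∈ Finset.range m, f k :=
    Finset.prod_pos (fun k hk => h1 k (Finset.mem_range.1 hk))
  have hp2 : ∏ k ∈ Finset.Ico m d, f k
      = (-1:ℝ)^(d-m) * ∏ k ∈ Finset.Ico m d, (-(f k)) := by
    rw [show (d - m) = (Finset.Ico m d).card from (Nat.card_Ico m d).symm,
      ← Finset.prod_const, ← Finset.prod_mul_distrib]
    exact Finset.prod_congr rfl (fun k _ => by ring)
  have hp3 : 0 < ∏ k ∈ Finset.Ico m d, (-(f k)) :=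
    Finset.prod_pos (fun k hk => by
      have := h2 k (Finset.mem_Ico.1 hk).1 (Finset.mem_Ico.1 hk).2; linarith)
  rw [hp2]
  have hsq : (-1:ℝ)^(d-m) * (-1:ℝ)^(d-m) = 1 := by
    rw [← pow_add]; exact Even.neg_one_pow ⟨d-m, by ring⟩
  nlinarith [mul_pos hp1 hp3]

lemma exp_ne_exp (a b : ℝ) (h1 : 0 < b - a) (h2 : b - a < 2 * Real.pi) :
    Complex.exp ((a:ℂ)*I) ≠ Complex.exp ((b:ℂ)*I) := by
  intro h
  obtain ⟨n, hn⟩ := Complex.exp_eq_exp_iff_exists_int.1 h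
  have him : a = b + (n:ℝ) * (2 * Real.pi) := by
    have := congrArg Complex.im hn
    simpa using this
  have hpi := Real.pi_pos
  rcases lt_or_ge n 0 with hneg | hpos
  · have : (n:ℝ) ≤ -1 := by exact_mod_cast Int.le_sub_one_of_lt hneg
    nlinarith
  · have : (0:ℝ) ≤ (n:ℝ) := by exact_mod_cast hpos
    nlinarith

theorem main_aux (P Q : Polynomial ℝ) (d : ℕ) (hd1 : 1 ≤ d)
    (hP : P.natDegree = d) (hQ : Q.natDegree = d)
    (hPlead : 0 < P.leadingCoeff) (hQlead : 0 < Q.leadingCoeff)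
    (hPrec : Polynomial.reflect d P = P)
    (hQanti : Polynomial.reflect d Q = -Q)
    (θ : ℕ → ℝ)
    (hθmono : ∀ i j : ℕ, i < j → j < 2 * d → θ i < θ j)
    (hθwin : θ (2 * d - 1) < θ 0 + 2 * Real.pi)
    (hProots : ∀ j < d, aeval (Complex.exp ((θ (2*j) : ℂ) * I)) P = 0)
    (hQroots : ∀ j < d, aeval (Complex.exp ((θ (2*j+1) : ℂ) * I)) Q = 0) :
    ∀ w : ℂ, aeval w P - Complex.I * aeval w Q = 0 → ‖w‖ = 1 := by
  have hpi := Real.pi_pos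
  have hmono' : ∀ m n, m ≤ n → n < 2*d → θ m ≤ θ n := by
    intro m n hmn hn
    rcases eq_or_lt_of_le hmn with rfl | h
    · exact le_refl _
    · exact (hθmono _ _ h hn).le
  have hwin : ∀ m n, m < 2*d → n < 2*d → θ n - θ m < 2*Real.pi := by
    intro m n hm hn
    have h1 : θ n ≤ θ (2*d-1) := hmono' n (2*d-1) (by omega) (by omega)
    have h2 : θ 0 ≤ θ m := hmono' 0 m (by omega) hm
    linarith
  have hexpne2 : ∀ m n, m < n → n < 2*d →
      Complex.exp ((θ m : ℂ)*I) ≠ Complex.exp ((θ n : ℂ)*I) := by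
    intro m n hmn hn
    exact exp_ne_exp _ _ (by have := hθmono m n hmn hn; linarith)
      (by have := hwin m n (by omega) hn; linarith)
  have hP0 : P ≠ 0 := fun h => by rw [h, leadingCoeff_zero] at hPlead; exact lt_irrefl _ hPlead
  have hQ0 : Q ≠ 0 := fun h => by rw [h, leadingCoeff_zero] at hQlead; exact lt_irrefl _ hQlead
  obtain ⟨CP, hCP0, hCPform⟩ := circle_form P d hP hP0 (fun j => θ (2*j))
    (by
      intro i hi j hj hij
      rcases lt_trichotomy i j with h | h | h
      · exact absurd hij (hexpne2 (2*i) (2*j) (by omega) (by omega))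
      · exact h
      · exact absurd hij.symm (hexpne2 (2*j) (2*i) (by omega) (by omega)))
    hProots
  obtain ⟨CQ, hCQ0, hCQform⟩ := circle_form Q d hQ hQ0 (fun j => θ (2*j+1))
    (by
      intro i hi j hj hij
      rcases lt_trichotomy i j with h | h | h
      · exact absurd hij (hexpne2 (2*i+1) (2*j+1) (by omega) (by omega))
      · exact h
      · exact absurd hij.symm (hexpne2 (2*j+1) (2*i+1) (by omega) (by omega)))
    hQroots
  -- realness of CP
  have hconjP := conj_const P d hP 1 (by rw [one_smul]; exact hPrec) CP
    (fun j => θ (2*j)) hCPform (by norm_num) (θ 1)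
    (by
      intro j hj
      rcases Nat.eq_zero_or_pos j with rfl | hjpos
      · refine ne_of_gt (Real.sin_pos_of_pos_of_lt_pi ?_ ?_)
        · have := hθmono 0 1 (by omega) (by omega); simpa using by linarith
        · have := hwin 0 1 (by omega) (by omega); simpa using by linarith
      · refine ne_of_lt (Real.sin_neg_of_neg_of_neg_pi_lt ?_ ?_)
        · have := hθmono 1 (2*j) (by omega) (by omega); linarith
        · have := hwin 1 (2*j) (by omega) (by omega); linarith)
  have hCPre : CP = ((CP.re : ℝ) : ℂ) := by
    have : (starRingEnd ℂ) CP = CP := by simpa using hconjP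
    exact (Complex.conj_eq_iff_re.1 this).symm
  set cP := CP.re with hcPdef
  have hcP0 : cP ≠ 0 := fun h => hCP0 (by rw [hCPre, h]; simp)
  -- imaginarity of CQ
  have hconjQ := conj_const Q d hQ (-1) (by rw [neg_one_smul]; exact hQanti) CQ
    (fun j => θ (2*j+1)) hCQform (by norm_num) (θ 0)
    (by
      intro j hj
      refine ne_of_lt (Real.sin_neg_of_neg_of_neg_pi_lt ?_ ?_)
      · have := hθmono 0 (2*j+1) (by omega) (by omega); linarith
      · have := hwin 0 (2*j+1) (by omega) (by omega); linarith)
  have hCQre : CQ = ((CQ.im : ℝ) : ℂ) * Complex.I := by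
    have h1 : (starRingEnd ℂ) CQ = -CQ := by
      rw [hconjQ]; push_cast; ring
    have h2 : CQ.re = 0 := by
      have := congrArg Complex.re h1
      simp at this
      linarith
    have := Complex.re_add_im CQ
    rw [h2] at this
    simpa using this.symm
  set cQ := CQ.im with hcQdef
  have hcQ0 : cQ ≠ 0 := fun h => hCQ0 (by rw [hCQre, h]; simp)
  -- the real function
  set sP : ℝ → ℝ := fun t => ∏ j ∈ Finset.range d, Real.sin ((t - θ (2*j))/2) with hsPdef
  set sQ : ℝ → ℝ := fun t => ∏ j ∈ Finset.range d, Real.sin ((t - θ (2*j+1))/2) with hsQdef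
  set Hf : ℝ → ℝ := fun t => cP * sP t + cQ * sQ t with hHdef
  have hHc : Continuous Hf := by
    apply Continuous.add
    · apply continuous_const.mul
      apply continuous_finset_prod
      intro j _
      exact Real.continuous_sin.comp (by fun_prop)
    · apply continuous_const.mul
      apply continuous_finset_prod
      intro j _
      exact Real.continuous_sin.comp (by fun_prop)
  have hHroot : ∀ t : ℝ, Hf t = 0 →
      aeval (Complex.exp ((t:ℂ)*I)) P - Complex.I * aeval (Complex.exp ((t:ℂ)*I)) Q = 0 := by
    intro t ht
    rw [hCPform t, hCQform t]
    have e1 : ∏ j ∈ Finset.range d, ((Real.sin ((t - θ (2*j))/2) : ℝ) : ℂ)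
        = ((sP t : ℝ) : ℂ) := by rw [hsPdef]; push_cast; ring
    have e2 : ∏ j ∈ Finset.range d, ((Real.sin ((t - θ (2*j+1))/2) : ℝ) : ℂ)
        = ((sQ t : ℝ) : ℂ) := by rw [hsQdef]; push_cast; ring
    rw [e1, e2, hCPre, hCQre]
    have h0 : cP * sP t + cQ * sQ t = 0 := ht
    have hcast : ((cP * sP t + cQ * sQ t : ℝ) : ℂ) = 0 := by
      rw [h0]; simp
    set E := Complex.exp (((d*t/2 : ℝ):ℂ) * I) with hE
    have : (cP : ℂ) * E * ((sP t : ℝ):ℂ) - Complex.I * ((cQ:ℂ) * Complex.I * E * ((sQ t : ℝ):ℂ))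
        = E * ((cP * sP t + cQ * sQ t : ℝ) : ℂ) := by
      push_cast
      linear_combination (-(cQ:ℂ) * (sQ t : ℂ) * E) * Complex.I_sq
    rw [this, hcast, mul_zero]
  -- sample values
  have hsPz : ∀ j < d, sP (θ (2*j)) = 0 := by
    intro j hj
    exact Finset.prod_eq_zero (Finset.mem_range.2 hj) (by simp)
  have hsQz : ∀ j < d, sQ (θ (2*j+1)) = 0 := by
    intro j hj
    exact Finset.prod_eq_zero (Finset.mem_range.2 hj) (by simp)
  have hHodd : ∀ j < d, Hf (θ (2*j+1)) = cP * sP (θ (2*j+1)) := by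
    intro j hj
    rw [hHdef]
    simp [hsQz j hj]
  have hHeven : ∀ j < d, Hf (θ (2*j)) = cQ * sQ (θ (2*j)) := by
    intro j hj
    rw [hHdef]
    simp [hsPz j hj]
  -- sign information
  have hSA : ∀ j < d, 0 < (-1:ℝ)^(d-(j+1)) * sP (θ (2*j+1)) := by
    intro j hj
    apply prod_sign d (j+1) (by omega)
    · intro k hk
      apply Real.sin_pos_of_pos_of_lt_pi
      · have := hθmono (2*k) (2*j+1) (by omega) (by omega); linarith
      · have := hwin (2*k) (2*j+1) (by omega) (by omega); linarith
    · intro k hk1 hk2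
      apply Real.sin_neg_of_neg_of_neg_pi_lt
      · have := hθmono (2*j+1) (2*k) (by omega) (by omega); linarith
      · have := hwin (2*j+1) (2*k) (by omega) (by omega); linarith
  have hSB : ∀ j < d, 0 < (-1:ℝ)^(d-j) * sQ (θ (2*j)) := by
    intro j hj
    apply prod_sign d j (by omega)
    · intro k hk
      apply Real.sin_pos_of_pos_of_lt_pi
      · have := hθmono (2*k+1) (2*j) (by omega) (by omega); linarith
      · have := hwin (2*k+1) (2*j) (by omega) (by omega); linarith
    · intro k hk1 hk2
      apply Real.sin_neg_of_neg_of_neg_pi_lt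
      · have := hθmono (2*j) (2*k+1) (by omega) (by omega); linarith
      · have := hwin (2*j) (2*k+1) (by omega) (by omega); linarith
  have hSC : 0 < sQ (θ 0 + 2*Real.pi) := by
    apply Finset.prod_pos
    intro k hk
    have hk' := Finset.mem_range.1 hk
    apply Real.sin_pos_of_pos_of_lt_pi
    · have := hwin 0 (2*k+1) (by omega) (by omega); linarith
    · have := hθmono 0 (2*k+1) (by omega) (by omega); linarith
  have hsPwrap : sP (θ 0 + 2*Real.pi) = 0 := by
    apply Finset.prod_eq_zero (Finset.mem_range.2 (by omega : 0 < d))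
    have : (θ 0 + 2*Real.pi - θ (2*0))/2 = Real.pi := by norm_num
    rw [this, Real.sin_pi]
  have hHwrap : Hf (θ 0 + 2*Real.pi) = cQ * sQ (θ 0 + 2*Real.pi) := by
    rw [hHdef]; simp [hsPwrap]
  -- find the d zeros
  have hgood : ∃ u : ℕ → ℝ, (∀ j < d, Hf (u j) = 0) ∧
      (∀ i j, i < j → j < d → 0 < u j - u i ∧ u j - u i < 2*Real.pi) := by
    rcases lt_trichotomy (cP * cQ) 0 with hcase | hcase | hcase
    · -- cP * cQ < 0 : intervals (θ(2j+1), next odd or wrap)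
      set b : ℕ → ℝ := fun j => if j + 1 = d then θ 0 + 2*Real.pi else θ (2*(j+1)+1) with hbdef
      obtain ⟨u, hu⟩ := find_zeros Hf hHc d (fun j => θ (2*j+1)) b
        (by
          intro j hj
          simp only [hbdef]
          by_cases hjd : j + 1 = d
          · rw [if_pos hjd]
            have := hwin 0 (2*j+1) (by omega) (by omega); linarith
          · rw [if_neg hjd]
            exact hθmono (2*j+1) (2*(j+1)+1) (by omega) (by omega))
        (by
          intro j hj
          simp only [hbdef]
          rw [hHodd j hj]
          by_cases hjd : j + 1 = d
          · rw [if_pos hjd, hHwrap]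
            have h1 := hSA j hj
            rw [show d - (j+1) = 0 from by omega, pow_zero, one_mul] at h1
            calc cP * sP (θ (2*j+1)) * (cQ * sQ (θ 0 + 2*Real.pi))
                = (cP * cQ) * (sP (θ (2*j+1)) * sQ (θ 0 + 2*Real.pi)) := by ring
              _ < 0 := mul_neg_of_neg_of_pos hcase (mul_pos h1 hSC)
          · rw [if_neg hjd, hHodd (j+1) (by omega)]
            have h1 := hSA j hj
            have h2 := hSA (j+1) (by omega)
            have hid : ((-1:ℝ)^(d-(j+1))) * ((-1:ℝ)^(d-(j+2))) = -1 := by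
              rw [← pow_add, show (d-(j+1))+(d-(j+2)) = 2*(d-(j+2))+1 from by omega]
              exact Odd.neg_one_pow ⟨d-(j+2), rfl⟩
            have hkey : sP (θ (2*j+1)) * sP (θ (2*(j+1)+1)) < 0 := by
              have heq : sP (θ (2*j+1)) * sP (θ (2*(j+1)+1))
                  = -((((-1:ℝ)^(d-(j+1))) * sP (θ (2*j+1)))
                    * (((-1:ℝ)^(d-(j+2))) * sP (θ (2*(j+1)+1)))) := by
                have h2' : d - ((j+1)+1) = d - (j+2) := by omega
                linear_combination (sP (θ (2*j+1)) * sP (θ (2*(j+1)+1))) * hid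
              rw [heq]
              have h2' : 0 < (-1:ℝ)^(d-(j+2)) * sP (θ (2*(j+1)+1)) := by
                have : d - ((j+1)+1) = d - (j+2) := by omega
                rw [← this]; exact h2
              linarith [mul_pos h1 h2']
            calc cP * sP (θ (2*j+1)) * (cP * sP (θ (2*(j+1)+1)))
                = (cP * cP) * (sP (θ (2*j+1)) * sP (θ (2*(j+1)+1))) := by ring
              _ < 0 := mul_neg_of_pos_of_neg (mul_self_pos.2 hcP0) hkey)
      refine ⟨u, fun j hj => (hu j hj).2.2, ?_⟩
      intro i j hij hj
      have hui := hu i (by omega)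
      have huj := hu j hj
      have hbi : b i = θ (2*(i+1)+1) := by
        simp only [hbdef]; exact if_neg (by omega : ¬ i + 1 = d)
      constructor
      · have : θ (2*(i+1)+1) ≤ θ (2*j+1) := hmono' (2*(i+1)+1) (2*j+1) (by omega) (by omega)
        have h1 := hui.2.1
        rw [hbi] at h1
        have h2 := huj.1
        linarith
      · have h1 := hui.1
        have h2 := huj.2.1
        have hbj : b j ≤ θ 0 + 2*Real.pi := by
          simp only [hbdef]
          by_cases hjd : j + 1 = d
          · rw [if_pos hjd]
          · rw [if_neg hjd]
            have := hwin 0 (2*(j+1)+1) (by omega) (by omega); linarith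
        have h3 : θ 0 < θ (2*i+1) := hθmono 0 (2*i+1) (by omega) (by omega)
        linarith
    · exact absurd hcase (mul_ne_zero hcP0 hcQ0)
    · -- 0 < cP * cQ : intervals (θ(2j), θ(2j+1))
      obtain ⟨u, hu⟩ := find_zeros Hf hHc d (fun j => θ (2*j)) (fun j => θ (2*j+1))
        (fun j hj => hθmono (2*j) (2*j+1) (by omega) (by omega))
        (by
          intro j hj
          rw [hHeven j hj, hHodd j hj]
          have h1 := hSB j hj
          have h2 := hSA j hj
          have hid : ((-1:ℝ)^(d-j)) * ((-1:ℝ)^(d-(j+1))) = -1 := by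
            rw [← pow_add, show (d-j)+(d-(j+1)) = 2*(d-(j+1))+1 from by omega]
            exact Odd.neg_one_pow ⟨d-(j+1), rfl⟩
          have hkey : sQ (θ (2*j)) * sP (θ (2*j+1)) < 0 := by
            have heq : sQ (θ (2*j)) * sP (θ (2*j+1))
                = -((((-1:ℝ)^(d-j)) * sQ (θ (2*j)))
                  * (((-1:ℝ)^(d-(j+1))) * sP (θ (2*j+1)))) := by
              linear_combination (sQ (θ (2*j)) * sP (θ (2*j+1))) * hid
            rw [heq]
            linarith [mul_pos h1 h2]
          calc cQ * sQ (θ (2*j)) * (cP * sP (θ (2*j+1)))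
              = (cP * cQ) * (sQ (θ (2*j)) * sP (θ (2*j+1))) := by ring
            _ < 0 := mul_neg_of_pos_of_neg hcase hkey)
      refine ⟨u, fun j hj => (hu j hj).2.2, ?_⟩
      intro i j hij hj
      have hui := hu i (by omega)
      have huj := hu j hj
      constructor
      · have : θ (2*i+1) ≤ θ (2*j) := hmono' (2*i+1) (2*j) (by omega) (by omega)
        linarith [hui.2.1, huj.1]
      · have h1 : θ 0 ≤ θ (2*i) := hmono' 0 (2*i) (by omega) (by omega)
        have h2 : θ (2*j+1) ≤ θ (2*d-1) := hmono' (2*j+1) (2*d-1) (by omega) (by omega)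
        linarith [hui.1, huj.2.1]
  obtain ⟨u, huz, huord⟩ := hgood
  -- the complex polynomial R
  set R : Polynomial ℂ := P.map (algebraMap ℝ ℂ) - Polynomial.C Complex.I * Q.map (algebraMap ℝ ℂ)
    with hRdef
  have hevalR : ∀ w : ℂ, R.eval w = aeval w P - Complex.I * aeval w Q := by
    intro w
    rw [hRdef]
    simp [eval_map, aeval_def]
  have hcoeffR : R.coeff d = ((P.leadingCoeff : ℝ) : ℂ) - Complex.I * ((Q.leadingCoeff : ℝ) : ℂ) := by
    rw [hRdef]
    simp only [coeff_sub, coeff_C_mul, coeff_map]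
    have e1 : P.coeff d = P.leadingCoeff := by rw [← hP]; exact Polynomial.coeff_natDegree
    have e2 : Q.coeff d = Q.leadingCoeff := by rw [← hQ]; exact Polynomial.coeff_natDegree
    rw [e1, e2]
    rfl
  have hcne : R.coeff d ≠ 0 := by
    rw [hcoeffR]
    intro h
    have h2 : P.leadingCoeff = 0 := by
      have := congrArg Complex.re h
      simpa only [Complex.sub_re, Complex.mul_re, Complex.ofReal_re, Complex.ofReal_im,
        Complex.I_re, Complex.I_im, Complex.zero_re, zero_mul, one_mul, mul_zero,
        sub_zero, zero_sub, sub_neg_eq_add, add_zero, zero_add, neg_zero] using this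
    exact absurd h2 (ne_of_gt hPlead)
  have hR0 : R ≠ 0 := fun h => hcne (by rw [h]; simp)
  have hRdeg : R.natDegree = d := by
    refine le_antisymm ?_ (le_natDegree_of_ne_zero hcne)
    refine le_trans (natDegree_sub_le _ _) ?_
    rw [natDegree_map]
    refine max_le (le_of_eq hP) (le_trans (natDegree_C_mul_le _ _) ?_)
    rw [natDegree_map]
    exact le_of_eq hQ
  set r : ℕ → ℂ := fun j => Complex.exp ((u j : ℂ) * I) with hrdef
  have hrinj : ∀ i < d, ∀ j < d, r i = r j → i = j := by
    intro i hi j hj hij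
    rcases lt_trichotomy i j with h | h | h
    · obtain ⟨ho1, ho2⟩ := huord i j h hj
      exact absurd hij (exp_ne_exp _ _ ho1 ho2)
    · exact h
    · obtain ⟨ho1, ho2⟩ := huord j i h hi
      exact absurd hij.symm (exp_ne_exp _ _ ho1 ho2)
  have hroots : ∀ j < d, R.eval (r j) = 0 := by
    intro j hj
    rw [hevalR]
    exact hHroot (u j) (huz j hj)
  intro w hw
  have hwR : R.eval w = 0 := by rw [hevalR]; exact hw
  obtain ⟨j, hj, rfl⟩ := root_mem R d hRdeg hR0 r hrinj hroots w hwR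
  rw [hrdef]
  simp [Complex.norm_exp]

/-- The roots of `P` and `Q` all lie on the unit circle and interlace there:
there are angles `θ 0 < θ 1 < ⋯ < θ (2d-1)`, lying within one period of length `2π`,
such that the roots of `P` are the points `exp(i θ (2j))` and the roots of `Q` are
the points `exp(i θ (2j+1))`. -/
def UnitCircleInterlace (P Q : Polynomial ℝ) (d : ℕ) : Prop :=
  ∃ θ : ℕ → ℝ,
    (∀ i j : ℕ, i < j → j < 2 * d → θ i < θ j) ∧
    θ (2 * d - 1) < θ 0 + 2 * Real.pi ∧
    (∀ z : ℂ, Polynomial.aeval z P = 0 ↔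
      ∃ j : ℕ, j < d ∧ z = Complex.exp (θ (2 * j) * Complex.I)) ∧
    (∀ z : ℂ, Polynomial.aeval z Q = 0 ↔
      ∃ j : ℕ, j < d ∧ z = Complex.exp (θ (2 * j + 1) * Complex.I))

theorem stmt_14 (P Q : Polynomial ℝ) (d : ℕ)
    (hcop : IsCoprime P Q)
    (hP : P.natDegree = d) (hQ : Q.natDegree = d)
    (hPlead : 0 < P.leadingCoeff) (hQlead : 0 < Q.leadingCoeff)
    (hPrec : Polynomial.reflect d P = P)
    (hQanti : Polynomial.reflect d Q = -Q)
    (hPsf : Squarefree P) (hQsf : Squarefree Q)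
    (hint : UnitCircleInterlace P Q d) :
    ∀ z : ℂ, Polynomial.aeval z (P ^ 2 + Q ^ 2) = 0 → ‖z‖ = 1 := by
  intro z hz
  have hz2 : (aeval z P)^2 + (aeval z Q)^2 = 0 := by
    simpa [map_add, map_pow] using hz
  by_cases hd0 : d = 0
  · exfalso
    have hPc : P = Polynomial.C (P.coeff 0) := eq_C_of_natDegree_eq_zero (hd0 ▸ hP)
    have hQc : Q = Polynomial.C (Q.coeff 0) := eq_C_of_natDegree_eq_zero (hd0 ▸ hQ)
    rw [hPc, hQc] at hz2
    simp only [aeval_C, Complex.coe_algebraMap] at hz2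
    have hcast : ((P.coeff 0 ^ 2 + Q.coeff 0 ^ 2 : ℝ) : ℂ) = 0 := by
      push_cast
      exact_mod_cast hz2
    have hre : P.coeff 0 ^ 2 + Q.coeff 0 ^ 2 = 0 := by exact_mod_cast hcast
    have hPl : P.leadingCoeff = P.coeff 0 := by
      rw [Polynomial.leadingCoeff, hP, hd0]
    nlinarith [hPlead, sq_nonneg (Q.coeff 0), hPl]
  · obtain ⟨θ, h1, h2, h3, h4⟩ := hint
    have key := main_aux P Q d (by omega) hP hQ hPlead hQlead hPrec hQanti θ h1 h2
      (fun j hj => (h3 _).2 ⟨j, hj, rfl⟩) (fun j hj => (h4 _).2 ⟨j, hj, rfl⟩)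
    have hfact : (aeval z P + Complex.I * aeval z Q) * (aeval z P - Complex.I * aeval z Q) = 0 := by
      linear_combination hz2 - (aeval z Q)^2 * Complex.I_sq
    rcases mul_eq_zero.1 hfact with h | h
    · have hc : aeval ((starRingEnd ℂ) z) P - Complex.I * aeval ((starRingEnd ℂ) z) Q = 0 := by
        rw [Polynomial.aeval_conj, Polynomial.aeval_conj]
        have hc2 := congrArg (starRingEnd ℂ) h
        simp only [map_add, map_mul, Complex.conj_I, map_zero] at hc2
        linear_combination hc2
      have := key _ hc
      rwa [Complex.norm_conj] at this
    · exact key z h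
end
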